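/- Let Y ⊆ F_rⁿ and Y' ⊆ F_r^m be nonempty algebraic sets over F_r. Then Y and Y' are isomorphic as algebraic sets if and only if there is an F_r-isomorphism between their coordinate algebras Γ(Y) and Γ(Y'). -/

import Mathlib

open LieAlgebra

universe u v w

/-- A Lie ring is metabelian if it satisfies the identity `⁅⁅x₁,x₂⁆,⁅x₃,x₄⁆⁆ = 0`. -/
def IsMetabelian (L : Type v) [LieRing L] : Prop :=
  ∀ a b c d : L, ⁅⁅a, b⁆, ⁅c, d⁆⁆ = 0

variable (k : Type u) [Field k]

namespace LieMeta

/-- The canonical projection onto the quotient by a Lie ideal, as a Lie algebra morphism. -/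
def mkHom {L : Type v} [LieRing L] [LieAlgebra k L] (I : LieIdeal k L) : L →ₗ⁅k⁆ L ⧸ I :=
  { I.toSubmodule.mkQ with
    map_lie' := fun {_ _} => rfl }

variable {k}

/-- Lift of a Lie algebra morphism through a quotient by an ideal inside its kernel. -/
def qlift {L : Type v} {B : Type w} [LieRing L] [LieAlgebra k L] [LieRing B] [LieAlgebra k B]
    (I : LieIdeal k L) (f : L →ₗ⁅k⁆ B) (h : I ≤ f.ker) : (L ⧸ I) →ₗ⁅k⁆ B :=
  { Submodule.liftQ I.toSubmodule (f : L →ₗ[k] B)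
      (fun x hx => by simpa using (LieHom.mem_ker).mp (h hx)) with
    map_lie' := by
      rintro ⟨x⟩ ⟨y⟩
      exact f.map_lie x y }

@[simp]
theorem qlift_mk {L : Type v} {B : Type w} [LieRing L] [LieAlgebra k L] [LieRing B]
    [LieAlgebra k B] (I : LieIdeal k L) (f : L →ₗ⁅k⁆ B) (h : I ≤ f.ker) (x : L) :
    qlift I f h (mkHom k I x) = f x := rfl

/-- In a metabelian Lie algebra the second derived ideal vanishes. -/
theorem derivedSeries_two_eq_bot_of_isMetabelian {B : Type w} [LieRing B] [LieAlgebra k B]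
    (hB : IsMetabelian B) : derivedSeries k B 2 = ⊥ := by
  have hD1 : ∀ x ∈ derivedSeries k B 1, ∀ m ∈ derivedSeries k B 1, ⁅x, m⁆ = (0 : B) := by
    have hspan : (↑(derivedSeries k B 1) : Submodule k B) =
        Submodule.span k {m | ∃ x ∈ (⊤ : LieIdeal k B), ∃ n ∈ (⊤ : LieIdeal k B), ⁅x, n⁆ = m} := by
      rw [show derivedSeries k B 1 = ⁅(⊤ : LieIdeal k B), (⊤ : LieIdeal k B)⁆ by
        rw [derivedSeries_def, derivedSeriesOfIdeal_succ, derivedSeriesOfIdeal_zero]]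
      exact LieSubmodule.lieIdeal_oper_eq_linear_span' ..
    intro x hx
    have hx' : x ∈ Submodule.span k
        {m | ∃ x ∈ (⊤ : LieIdeal k B), ∃ n ∈ (⊤ : LieIdeal k B), ⁅x, n⁆ = m} := by
      rw [← hspan]; exact hx
    clear hx
    induction hx' using Submodule.span_induction with
    | mem z hz =>
      obtain ⟨a, -, b, -, rfl⟩ := hz
      intro m hm
      have hm' : m ∈ Submodule.span k
          {m | ∃ x ∈ (⊤ : LieIdeal k B), ∃ n ∈ (⊤ : LieIdeal k B), ⁅x, n⁆ = m} := by
        rw [← hspan]; exact hm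
      clear hm
      induction hm' using Submodule.span_induction with
      | mem w hw => obtain ⟨c, -, d, -, rfl⟩ := hw; exact hB a b c d
      | zero => exact lie_zero _
      | add u v _ _ hu hv => rw [lie_add, hu, hv, add_zero]
      | smul t u _ hu => rw [lie_smul, hu, smul_zero]
    | zero => intro m _; exact zero_lie m
    | add u v _ _ hu hv =>
      intro m hm; rw [add_lie, hu m hm, hv m hm, add_zero]
    | smul t u _ hu => intro m hm; rw [smul_lie, hu m hm, smul_zero]
  rw [eq_bot_iff, show derivedSeries k B 2 = ⁅derivedSeries k B 1, derivedSeries k B 1⁆ by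
    rw [derivedSeries_def, derivedSeriesOfIdeal_succ]]
  rw [LieSubmodule.lie_le_iff]
  intro x hx m hm
  rw [LieSubmodule.mem_bot]
  exact hD1 x hx m hm

end LieMeta

/-- The free metabelian Lie algebra over `k` on a set `X` of generators: the quotient of the
free Lie algebra by its second derived ideal. -/
abbrev FreeMetabelian (X : Type v) : Type _ :=
  FreeLieAlgebra k X ⧸ derivedSeries k (FreeLieAlgebra k X) 2

namespace FreeMetabelian

/-- The canonical (free) generators of the free metabelian Lie algebra. -/
noncomputable def of (X : Type v) (x : X) : FreeMetabelian k X :=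
  LieMeta.mkHom k (derivedSeries k (FreeLieAlgebra k X) 2) (FreeLieAlgebra.of k x)

theorem isMetabelian (X : Type v) : IsMetabelian (FreeMetabelian k X) := by
  rintro ⟨a⟩ ⟨b⟩ ⟨c⟩ ⟨d⟩
  show LieMeta.mkHom k (derivedSeries k (FreeLieAlgebra k X) 2) ⁅⁅a, b⁆, ⁅c, d⁆⁆ = 0
  have h1 : ∀ x y : FreeLieAlgebra k X, ⁅x, y⁆ ∈ derivedSeries k (FreeLieAlgebra k X) 1 := by
    intro x y
    rw [show derivedSeries k (FreeLieAlgebra k X) 1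
        = ⁅(⊤ : LieIdeal k (FreeLieAlgebra k X)), (⊤ : LieIdeal k (FreeLieAlgebra k X))⁆ by
      rw [derivedSeries_def, derivedSeriesOfIdeal_succ, derivedSeriesOfIdeal_zero]]
    exact LieSubmodule.lie_mem_lie trivial trivial
  have h2 : ⁅⁅a, b⁆, ⁅c, d⁆⁆ ∈ derivedSeries k (FreeLieAlgebra k X) 2 := by
    rw [show derivedSeries k (FreeLieAlgebra k X) 2
        = ⁅derivedSeries k (FreeLieAlgebra k X) 1, derivedSeries k (FreeLieAlgebra k X) 1⁆ by
      rw [derivedSeries_def, derivedSeriesOfIdeal_succ]]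
    exact LieSubmodule.lie_mem_lie (h1 a b) (h1 c d)
  exact (LieSubmodule.Quotient.mk_eq_zero _).mpr h2

variable {k}

/-- The universal property: a map on generators into a metabelian Lie algebra extends
uniquely to the free metabelian Lie algebra. -/
noncomputable def lift {X : Type v} {B : Type w} [LieRing B] [LieAlgebra k B]
    (f : X → B) (hB : IsMetabelian B) : FreeMetabelian k X →ₗ⁅k⁆ B :=
  LieMeta.qlift _ (FreeLieAlgebra.lift k f) (by
    intro x hx
    rw [LieHom.mem_ker]
    have h1 : FreeLieAlgebra.lift k f x ∈
        LieIdeal.map (FreeLieAlgebra.lift k f) (derivedSeries k (FreeLieAlgebra k X) 2) :=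
      LieIdeal.mem_map hx
    have h2 := LieIdeal.derivedSeries_map_le (f := FreeLieAlgebra.lift k f) 2
    rw [LieMeta.derivedSeries_two_eq_bot_of_isMetabelian hB] at h2
    simpa using h2 h1)

@[simp]
theorem lift_of {X : Type v} {B : Type w} [LieRing B] [LieAlgebra k B]
    (f : X → B) (hB : IsMetabelian B) (x : X) : lift f hB (of k X x) = f x := by
  show FreeLieAlgebra.lift k f (FreeLieAlgebra.of k x) = f x
  simp

end FreeMetabelian

namespace LieAG

variable (r n : ℕ)

/-- The inclusion of `F_r` into `F_{r+n}` sending `aᵢ` to `aᵢ`. -/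
noncomputable def incl : FreeMetabelian k (Fin r) →ₗ⁅k⁆ FreeMetabelian k (Fin r ⊕ Fin n) :=
  FreeMetabelian.lift (fun i => FreeMetabelian.of k _ (Sum.inl i))
    (FreeMetabelian.isMetabelian k _)

/-- Evaluation at the point `p`: the unique Lie algebra morphism `F_{r+n} → F_r` which is the
identity on the generators of `F_r` and sends the unknown `xⱼ` to `p j`. -/
noncomputable def ev (p : Fin n → FreeMetabelian k (Fin r)) :
    FreeMetabelian k (Fin r ⊕ Fin n) →ₗ⁅k⁆ FreeMetabelian k (Fin r) :=
  FreeMetabelian.lift (Sum.elim (FreeMetabelian.of k _) p) (FreeMetabelian.isMetabelian k _)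

/-- The algebraic set defined by the system of equations `S ⊆ F_{r+n}`. -/
def vSet (S : Set (FreeMetabelian k (Fin r ⊕ Fin n))) :
    Set (Fin n → FreeMetabelian k (Fin r)) :=
  {p | ∀ f ∈ S, ev k r n p f = 0}

/-- A subset of affine `n`-space over `F_r` is algebraic if it is the solution set of some
system of equations. -/
def IsAlgSet (Y : Set (Fin n → FreeMetabelian k (Fin r))) : Prop :=
  ∃ S, Y = vSet k r n S

/-- The radical of a subset `Y` of affine `n`-space, as a Lie ideal of `F_{r+n}`:
all equations vanishing on every point of `Y`. -/
noncomputable def radIdeal (Y : Set (Fin n → FreeMetabelian k (Fin r))) :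
    LieIdeal k (FreeMetabelian k (Fin r ⊕ Fin n)) :=
  ⨅ (p : Fin n → FreeMetabelian k (Fin r)) (_ : p ∈ Y), (ev k r n p).ker

/-- The coordinate algebra `Γ(Y) = F_{r+n} / Rad(Y)`. -/
abbrev Coord (Y : Set (Fin n → FreeMetabelian k (Fin r))) : Type _ :=
  FreeMetabelian k (Fin r ⊕ Fin n) ⧸ radIdeal k r n Y

/-- The canonical morphism `κ_Y : F_r → Γ(Y)`. -/
noncomputable def kappa (Y : Set (Fin n → FreeMetabelian k (Fin r))) :
    FreeMetabelian k (Fin r) →ₗ⁅k⁆ Coord k r n Y :=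
  (LieMeta.mkHom k (radIdeal k r n Y)).comp (incl k r n)

theorem radIdeal_le_ker {Y : Set (Fin n → FreeMetabelian k (Fin r))}
    {p : Fin n → FreeMetabelian k (Fin r)} (hp : p ∈ Y) :
    radIdeal k r n Y ≤ (ev k r n p).ker := by
  exact iInf₂_le p hp

/-- The `F_r`-morphism `Γ(Y) → F_r` induced by evaluation at a point of `Y`. -/
noncomputable def pointHom {Y : Set (Fin n → FreeMetabelian k (Fin r))}
    {p : Fin n → FreeMetabelian k (Fin r)} (hp : p ∈ Y) :
    Coord k r n Y →ₗ⁅k⁆ FreeMetabelian k (Fin r) :=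
  LieMeta.qlift _ (ev k r n p) (radIdeal_le_ker k r n hp)

/-- The point of affine space associated with a morphism `Γ(Y) → F_r`: the images of
the unknowns. -/
noncomputable def pointOf {Y : Set (Fin n → FreeMetabelian k (Fin r))}
    (φ : Coord k r n Y →ₗ⁅k⁆ FreeMetabelian k (Fin r)) :
    Fin n → FreeMetabelian k (Fin r) :=
  fun j => φ (LieMeta.mkHom k (radIdeal k r n Y) (FreeMetabelian.of k _ (Sum.inr j)))

/-- The Zariski topology on affine `n`-space over `F_r`: the algebraic sets form a
subbasis of closed sets. -/
def zariski : TopologicalSpace (Fin n → FreeMetabelian k (Fin r)) :=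
  TopologicalSpace.generateFrom {U | ∃ S, U = (vSet k r n S)ᶜ}

/-- A closed subset (in the Zariski topology) is irreducible if it is nonempty and is not the
union of two proper closed subsets. -/
def IsIrredClosed (Y : Set (Fin n → FreeMetabelian k (Fin r))) : Prop :=
  Y.Nonempty ∧ ∀ Y₁ Y₂ : Set (Fin n → FreeMetabelian k (Fin r)),
    @IsClosed _ (zariski k r n) Y₁ → @IsClosed _ (zariski k r n) Y₂ →
      Y₁ ⊂ Y → Y₂ ⊂ Y → Y ≠ Y₁ ∪ Y₂

/-- `Y` and `Z` are isomorphic algebraic sets: there are mutually inverse morphisms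
(given coordinatewise by Lie polynomials) between them. -/
def AlgIso {n m : ℕ} (Y : Set (Fin n → FreeMetabelian k (Fin r)))
    (Z : Set (Fin m → FreeMetabelian k (Fin r))) : Prop :=
  ∃ (fs : Fin m → FreeMetabelian k (Fin r ⊕ Fin n))
    (gs : Fin n → FreeMetabelian k (Fin r ⊕ Fin m)),
    (∀ p ∈ Y, (fun j => ev k r n p (fs j)) ∈ Z) ∧
    (∀ q ∈ Z, (fun i => ev k r m q (gs i)) ∈ Y) ∧
    (∀ p ∈ Y, (fun i => ev k r m (fun j => ev k r n p (fs j)) (gs i)) = p) ∧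
    (∀ q ∈ Z, (fun j => ev k r n (fun i => ev k r m q (gs i)) (fs j)) = q)

end LieAG

/-- The Fitting radical of a Lie algebra: the set of elements whose generated Lie ideal is
nilpotent. -/
def fittingSet (B : Type w) [LieRing B] [LieAlgebra k B] : Set B :=
  {x | ∃ i, LieModule.lowerCentralSeries k (LieSubmodule.lieSpan k B ({x} : Set B))
    (LieSubmodule.lieSpan k B ({x} : Set B)) i = ⊥}


section AuxProof

variable {k}

namespace LieMeta

theorem mkHom_surjective {L : Type v} [LieRing L] [LieAlgebra k L] (I : LieIdeal k L) :
    Function.Surjective (mkHom k I) :=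
  Submodule.Quotient.mk_surjective _

theorem mkHom_eq_zero {L : Type v} [LieRing L] [LieAlgebra k L] (I : LieIdeal k L) (x : L) :
    mkHom k I x = 0 ↔ x ∈ I :=
  Submodule.Quotient.mk_eq_zero _

theorem mkHom_eq {L : Type v} [LieRing L] [LieAlgebra k L] (I : LieIdeal k L) (x y : L) :
    mkHom k I x = mkHom k I y ↔ x - y ∈ I :=
  Submodule.Quotient.eq _

end LieMeta

namespace FreeMetabelian

theorem hom_ext' {X : Type v} {B : Type w} [LieRing B] [LieAlgebra k B]
    {F₁ F₂ : FreeMetabelian k X →ₗ⁅k⁆ B}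
    (h : ∀ x, F₁ (of k X x) = F₂ (of k X x)) : F₁ = F₂ := by
  have h2 : F₁.comp (LieMeta.mkHom k (derivedSeries k (FreeLieAlgebra k X) 2)) =
      F₂.comp (LieMeta.mkHom k (derivedSeries k (FreeLieAlgebra k X) 2)) :=
    FreeLieAlgebra.hom_ext fun x => h x
  ext z
  obtain ⟨x, rfl⟩ := LieMeta.mkHom_surjective _ z
  exact LieHom.congr_fun h2 x

end FreeMetabelian

namespace LieAG

/-- Substitution morphism `F_{r+n} → F_{r+m}` fixing the `aᵢ` and sending `xᵢ` to `gs i`. -/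
noncomputable def subst (r n m : ℕ) (gs : Fin n → FreeMetabelian k (Fin r ⊕ Fin m)) :
    FreeMetabelian k (Fin r ⊕ Fin n) →ₗ⁅k⁆ FreeMetabelian k (Fin r ⊕ Fin m) :=
  FreeMetabelian.lift (Sum.elim (fun i => FreeMetabelian.of k _ (Sum.inl i)) gs)
    (FreeMetabelian.isMetabelian k _)

theorem ev_comp_subst (r n m : ℕ) (gs : Fin n → FreeMetabelian k (Fin r ⊕ Fin m))
    (q : Fin m → FreeMetabelian k (Fin r)) :
    (ev k r m q).comp (subst r n m gs) = ev k r n (fun i => ev k r m q (gs i)) := by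
  apply FreeMetabelian.hom_ext'
  rintro (i | j) <;> simp [subst, ev, LieHom.comp_apply]

theorem ev_incl (r n : ℕ) (p : Fin n → FreeMetabelian k (Fin r)) (u : FreeMetabelian k (Fin r)) :
    ev k r n p (incl k r n u) = u := by
  have h : (ev k r n p).comp (incl k r n) = LieHom.id := by
    apply FreeMetabelian.hom_ext'
    intro i
    simp [ev, incl, LieHom.comp_apply]
  exact LieHom.congr_fun h u

theorem subst_incl (r n m : ℕ) (gs : Fin n → FreeMetabelian k (Fin r ⊕ Fin m))
    (u : FreeMetabelian k (Fin r)) :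
    subst r n m gs (incl k r n u) = incl k r m u := by
  have h : (subst r n m gs).comp (incl k r n) = incl k r m := by
    apply FreeMetabelian.hom_ext'
    intro i
    simp [subst, incl, LieHom.comp_apply]
  exact LieHom.congr_fun h u

theorem subst_of_inl (r n m : ℕ) (gs : Fin n → FreeMetabelian k (Fin r ⊕ Fin m)) (i : Fin r) :
    subst r n m gs (FreeMetabelian.of k _ (Sum.inl i)) = FreeMetabelian.of k _ (Sum.inl i) := by
  simp [subst]

theorem subst_of_inr (r n m : ℕ) (gs : Fin n → FreeMetabelian k (Fin r ⊕ Fin m)) (j : Fin n) :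
    subst r n m gs (FreeMetabelian.of k _ (Sum.inr j)) = gs j := by
  simp [subst]

theorem mem_radIdeal {r n : ℕ} {Y : Set (Fin n → FreeMetabelian k (Fin r))}
    {x : FreeMetabelian k (Fin r ⊕ Fin n)} :
    x ∈ radIdeal k r n Y ↔ ∀ p ∈ Y, ev k r n p x = 0 := by
  simp [radIdeal, LieSubmodule.mem_iInf, LieHom.mem_ker]

theorem ev_of_inl (r n : ℕ) (p : Fin n → FreeMetabelian k (Fin r)) (i : Fin r) :
    ev k r n p (FreeMetabelian.of k _ (Sum.inl i)) = FreeMetabelian.of k _ i := by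
  simp [ev]

theorem ev_of_inr (r n : ℕ) (p : Fin n → FreeMetabelian k (Fin r)) (j : Fin n) :
    ev k r n p (FreeMetabelian.of k _ (Sum.inr j)) = p j := by
  simp [ev]

theorem incl_of (r n : ℕ) (i : Fin r) :
    incl k r n (FreeMetabelian.of k (Fin r) i) = FreeMetabelian.of k _ (Sum.inl i) := by
  simp [incl]

theorem kappa_eq (r n : ℕ) (Y : Set (Fin n → FreeMetabelian k (Fin r)))
    (u : FreeMetabelian k (Fin r)) :
    kappa k r n Y u = LieMeta.mkHom k (radIdeal k r n Y) (incl k r n u) := rfl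

end LieAG

end AuxProof

/-- Two nonempty algebraic sets over `F_r` are isomorphic as algebraic sets
if and only if their coordinate algebras are `F_r`-isomorphic. -/
theorem algIso_iff_coord_iso
    (k : Type u) [Field k] (r : ℕ) (hr : 2 ≤ r) (n m : ℕ)
    (Y : Set (Fin n → FreeMetabelian k (Fin r)))
    (Z : Set (Fin m → FreeMetabelian k (Fin r)))
    (hY : LieAG.IsAlgSet k r n Y) (hZ : LieAG.IsAlgSet k r m Z)
    (hYne : Y.Nonempty) (hZne : Z.Nonempty) :
    LieAG.AlgIso k r Y Z ↔
      ∃ e : LieAG.Coord k r n Y ≃ₗ⁅k⁆ LieAG.Coord k r m Z,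
        ∀ u : FreeMetabelian k (Fin r),
          e (LieAG.kappa k r n Y u) = LieAG.kappa k r m Z u := by
  constructor
  · rintro ⟨fs, gs, h1, h2, h3, h4⟩
    have hA : LieAG.radIdeal k r n Y ≤
        ((LieMeta.mkHom k (LieAG.radIdeal k r m Z)).comp (LieAG.subst r n m gs)).ker := by
      intro x hx
      rw [LieHom.mem_ker, LieHom.comp_apply, LieMeta.mkHom_eq_zero]
      rw [LieAG.mem_radIdeal] at hx ⊢
      intro q hq
      have h := LieHom.congr_fun (LieAG.ev_comp_subst r n m gs q) x
      rw [LieHom.comp_apply] at h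
      rw [h]
      exact hx _ (h2 q hq)
    have hA' : LieAG.radIdeal k r m Z ≤
        ((LieMeta.mkHom k (LieAG.radIdeal k r n Y)).comp (LieAG.subst r m n fs)).ker := by
      intro x hx
      rw [LieHom.mem_ker, LieHom.comp_apply, LieMeta.mkHom_eq_zero]
      rw [LieAG.mem_radIdeal] at hx ⊢
      intro p hp
      have h := LieHom.congr_fun (LieAG.ev_comp_subst r m n fs p) x
      rw [LieHom.comp_apply] at h
      rw [h]
      exact hx _ (h1 p hp)
    set φ : LieAG.Coord k r n Y →ₗ⁅k⁆ LieAG.Coord k r m Z :=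
      LieMeta.qlift _ _ hA with hφdef
    set φ' : LieAG.Coord k r m Z →ₗ⁅k⁆ LieAG.Coord k r n Y :=
      LieMeta.qlift _ _ hA' with hφ'def
    have hφ : ∀ x, φ (LieMeta.mkHom k (LieAG.radIdeal k r n Y) x)
        = LieMeta.mkHom k (LieAG.radIdeal k r m Z) (LieAG.subst r n m gs x) := fun _ => rfl
    have hφ' : ∀ x, φ' (LieMeta.mkHom k (LieAG.radIdeal k r m Z) x)
        = LieMeta.mkHom k (LieAG.radIdeal k r n Y) (LieAG.subst r m n fs x) := fun _ => rfl
    have comp_eq : (LieMeta.mkHom k (LieAG.radIdeal k r n Y)).comp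
        ((LieAG.subst r m n fs).comp (LieAG.subst r n m gs))
        = LieMeta.mkHom k (LieAG.radIdeal k r n Y) := by
      apply FreeMetabelian.hom_ext'
      rintro (i | j)
      · simp [LieAG.subst, LieHom.comp_apply]
      · rw [LieHom.comp_apply, LieHom.comp_apply]
        rw [LieAG.subst_of_inr, LieMeta.mkHom_eq, LieAG.mem_radIdeal]
        intro p hp
        rw [map_sub]
        have hev := LieHom.congr_fun (LieAG.ev_comp_subst r m n fs p) (gs j)
        rw [LieHom.comp_apply] at hev
        rw [hev, LieAG.ev_of_inr, congrFun (h3 p hp) j, sub_self]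
    have comp_eq' : (LieMeta.mkHom k (LieAG.radIdeal k r m Z)).comp
        ((LieAG.subst r n m gs).comp (LieAG.subst r m n fs))
        = LieMeta.mkHom k (LieAG.radIdeal k r m Z) := by
      apply FreeMetabelian.hom_ext'
      rintro (i | j)
      · simp [LieAG.subst, LieHom.comp_apply]
      · rw [LieHom.comp_apply, LieHom.comp_apply]
        rw [LieAG.subst_of_inr, LieMeta.mkHom_eq, LieAG.mem_radIdeal]
        intro q hq
        rw [map_sub]
        have hev := LieHom.congr_fun (LieAG.ev_comp_subst r n m gs q) (fs j)
        rw [LieHom.comp_apply] at hev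
        rw [hev, LieAG.ev_of_inr, congrFun (h4 q hq) j, sub_self]
    have hleft : ∀ y, φ' (φ y) = y := by
      intro y
      obtain ⟨x, rfl⟩ := LieMeta.mkHom_surjective _ y
      rw [hφ, hφ']
      exact LieHom.congr_fun comp_eq x
    have hright : ∀ y, φ (φ' y) = y := by
      intro y
      obtain ⟨x, rfl⟩ := LieMeta.mkHom_surjective _ y
      rw [hφ', hφ]
      exact LieHom.congr_fun comp_eq' x
    refine ⟨⟨φ, φ', hleft, hright⟩, ?_⟩
    intro u
    show φ (LieAG.kappa k r n Y u) = LieAG.kappa k r m Z u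
    rw [LieAG.kappa_eq, hφ, LieAG.subst_incl, LieAG.kappa_eq]
  · rintro ⟨e, he⟩
    obtain ⟨SY, hSY⟩ := hY
    obtain ⟨SZ, hSZ⟩ := hZ
    have hesymm : ∀ u, e.symm (LieAG.kappa k r m Z u) = LieAG.kappa k r n Y u := by
      intro u
      rw [← he u, e.symm_apply_apply]
    choose fs hfsp using fun j : Fin m => LieMeta.mkHom_surjective (LieAG.radIdeal k r n Y)
      (e.symm (LieMeta.mkHom k (LieAG.radIdeal k r m Z) (FreeMetabelian.of k _ (Sum.inr j))))
    choose gs hgsp using fun i : Fin n => LieMeta.mkHom_surjective (LieAG.radIdeal k r m Z)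
      (e (LieMeta.mkHom k (LieAG.radIdeal k r n Y) (FreeMetabelian.of k _ (Sum.inr i))))
    have hmk_inl_Y : ∀ i : Fin r, LieMeta.mkHom k (LieAG.radIdeal k r n Y)
        (FreeMetabelian.of k _ (Sum.inl i)) = LieAG.kappa k r n Y (FreeMetabelian.of k _ i) := by
      intro i
      rw [LieAG.kappa_eq, LieAG.incl_of]
    have hmk_inl_Z : ∀ i : Fin r, LieMeta.mkHom k (LieAG.radIdeal k r m Z)
        (FreeMetabelian.of k _ (Sum.inl i)) = LieAG.kappa k r m Z (FreeMetabelian.of k _ i) := by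
      intro i
      rw [LieAG.kappa_eq, LieAG.incl_of]
    have hpointY : ∀ {p : Fin n → FreeMetabelian k (Fin r)} (hp : p ∈ Y) (x),
        LieAG.pointHom k r n hp (LieMeta.mkHom k (LieAG.radIdeal k r n Y) x)
          = LieAG.ev k r n p x := fun _ _ => rfl
    have hpointZ : ∀ {q : Fin m → FreeMetabelian k (Fin r)} (hq : q ∈ Z) (x),
        LieAG.pointHom k r m hq (LieMeta.mkHom k (LieAG.radIdeal k r m Z) x)
          = LieAG.ev k r m q x := fun _ _ => rfl
    have keyY : ∀ (p : Fin n → FreeMetabelian k (Fin r)) (hp : p ∈ Y),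
        LieAG.ev k r m (fun j => LieAG.ev k r n p (fs j))
          = ((LieAG.pointHom k r n hp).comp e.symm.toLieHom).comp
              (LieMeta.mkHom k (LieAG.radIdeal k r m Z)) := by
      intro p hp
      apply FreeMetabelian.hom_ext'
      rintro (i | j)
      · rw [LieHom.comp_apply, LieHom.comp_apply, LieAG.ev_of_inl, hmk_inl_Z]
        show _ = LieAG.pointHom k r n hp (e.symm (LieAG.kappa k r m Z _))
        rw [hesymm, LieAG.kappa_eq, hpointY hp, LieAG.ev_incl]
      · rw [LieHom.comp_apply, LieHom.comp_apply, LieAG.ev_of_inr]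
        show _ = LieAG.pointHom k r n hp (e.symm (LieMeta.mkHom k _ _))
        rw [← hfsp j, hpointY hp]
    have keyZ : ∀ (q : Fin m → FreeMetabelian k (Fin r)) (hq : q ∈ Z),
        LieAG.ev k r n (fun i => LieAG.ev k r m q (gs i))
          = ((LieAG.pointHom k r m hq).comp e.toLieHom).comp
              (LieMeta.mkHom k (LieAG.radIdeal k r n Y)) := by
      intro q hq
      apply FreeMetabelian.hom_ext'
      rintro (i | j)
      · rw [LieHom.comp_apply, LieHom.comp_apply, LieAG.ev_of_inl, hmk_inl_Y]
        show _ = LieAG.pointHom k r m hq (e (LieAG.kappa k r n Y _))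
        rw [he, LieAG.kappa_eq, hpointZ hq, LieAG.ev_incl]
      · rw [LieHom.comp_apply, LieHom.comp_apply, LieAG.ev_of_inr]
        show _ = LieAG.pointHom k r m hq (e (LieMeta.mkHom k _ _))
        rw [← hgsp j, hpointZ hq]
    refine ⟨fs, gs, ?_, ?_, ?_, ?_⟩
    · intro p hp
      rw [hSZ]
      intro f hf
      have hrad : f ∈ LieAG.radIdeal k r m Z := by
        rw [LieAG.mem_radIdeal]
        intro q hq
        rw [hSZ] at hq
        exact hq f hf
      rw [keyY p hp, LieHom.comp_apply, LieHom.comp_apply,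
        (LieMeta.mkHom_eq_zero _ f).mpr hrad, map_zero, map_zero]
    · intro q hq
      rw [hSY]
      intro f hf
      have hrad : f ∈ LieAG.radIdeal k r n Y := by
        rw [LieAG.mem_radIdeal]
        intro p hp
        rw [hSY] at hp
        exact hp f hf
      rw [keyZ q hq, LieHom.comp_apply, LieHom.comp_apply,
        (LieMeta.mkHom_eq_zero _ f).mpr hrad, map_zero, map_zero]
    · intro p hp
      funext i
      rw [LieHom.congr_fun (keyY p hp) (gs i)]
      rw [LieHom.comp_apply, LieHom.comp_apply]
      show LieAG.pointHom k r n hp (e.symm (LieMeta.mkHom k _ (gs i))) = p i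
      rw [hgsp i, e.symm_apply_apply, hpointY hp, LieAG.ev_of_inr]
    · intro q hq
      funext j
      rw [LieHom.congr_fun (keyZ q hq) (fs j)]
      rw [LieHom.comp_apply, LieHom.comp_apply]
      show LieAG.pointHom k r m hq (e (LieMeta.mkHom k _ (fs j))) = q j
      rw [hfsp j, e.apply_symm_apply, hpointZ hq, LieAG.ev_of_inr]
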